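/- For every L with 0 < L < ∞, there is no convex differentiable function f : ℝ² → ℝ whose gradient is L-Lipschitz and which satisfies simultaneously f((0,0)) = 0, ∇f((0,0)) = (1,0), f((1,0)) = 1, and ∇f((1,0)) = (1,1). -/

import Mathlib

open Set Filter Topology

-- subgradient inequality at 0
lemma subgrad {E : Type*} [NormedAddCommGroup E] [NormedSpace ℝ E] {f : E → ℝ}
    (hc : ConvexOn ℝ Set.univ f) (hd : DifferentiableAt ℝ f 0) (hf0 : f 0 = 0) (y : E) :
    fderiv ℝ f 0 y ≤ f y := by
  set g : ℝ → ℝ := fun t => f (t • y) with hg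
  have hderiv : HasDerivAt g (fderiv ℝ f 0 y) 0 := by
    have h1 : HasDerivAt (fun t : ℝ => t • y) y 0 := by
      simpa using (hasDerivAt_id (0:ℝ)).smul_const y
    have h2 : HasFDerivAt f (fderiv ℝ f 0) ((0:ℝ) • y) := by simpa using hd.hasFDerivAt
    exact h2.comp_hasDerivAt 0 h1
  have hslope : Tendsto (slope g 0) (𝓝[>] 0) (𝓝 (fderiv ℝ f 0 y)) :=
    (hasDerivAt_iff_tendsto_slope.mp hderiv).mono_left
      (nhdsWithin_mono _ (fun t ht => ne_of_gt ht))
  refine le_of_tendsto hslope ?_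
  filter_upwards [Ioc_mem_nhdsGT_of_mem (Set.left_mem_Ico.2 one_pos)] with t ht
  have h01 : (0:ℝ) ≤ 1 - t := by linarith [ht.2]
  have := hc.2 (Set.mem_univ (0:E)) (Set.mem_univ y) h01 (le_of_lt ht.1) (by ring)
  simp only [smul_zero, zero_add, hf0, smul_eq_mul, mul_zero] at this
  have hgt : g t ≤ t * f y := by simpa [hg] using this
  have hg0 : g 0 = 0 := by simpa [hg] using hf0
  rw [slope_def_field, hg0]
  rw [sub_zero, sub_zero, div_le_iff₀ ht.1]
  simpa [mul_comm] using hgt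

theorem no_smooth_convex_interpolant_dim2 (L : ℝ) (hL : 0 < L) :
    ¬ ∃ f : EuclideanSpace ℝ (Fin 2) → ℝ, ConvexOn ℝ Set.univ f ∧ Differentiable ℝ f ∧
      (∀ x y, ‖gradient f x - gradient f y‖ ≤ L * ‖x - y‖) ∧
      f ((WithLp.equiv 2 _).symm ![(0:ℝ), 0]) = 0 ∧
      gradient f ((WithLp.equiv 2 _).symm ![(0:ℝ), 0]) = (WithLp.equiv 2 _).symm ![(1:ℝ), 0] ∧
      f ((WithLp.equiv 2 _).symm ![(1:ℝ), 0]) = 1 ∧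
      gradient f ((WithLp.equiv 2 _).symm ![(1:ℝ), 0]) = (WithLp.equiv 2 _).symm ![(1:ℝ), 1] := by
  rintro ⟨f, hconv, hdiff, -, hf0, hg0, hf1, hg1⟩
  set a : EuclideanSpace ℝ (Fin 2) := (WithLp.equiv 2 _).symm ![(1:ℝ), 0] with ha
  set b : EuclideanSpace ℝ (Fin 2) := (WithLp.equiv 2 _).symm ![(1:ℝ), 1] with hb
  have hzero : ((WithLp.equiv 2 (Fin 2 → ℝ)).symm ![(0:ℝ), 0])
      = (0 : EuclideanSpace ℝ (Fin 2)) := by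
    ext i; fin_cases i <;> rfl
  rw [hzero] at hf0 hg0
  have ha0 : a 0 = 1 := rfl
  have ha1 : a 1 = 0 := rfl
  have hb1 : b 1 = 1 := rfl
  -- fderiv at 0 is toDual a
  have hfd0 : fderiv ℝ f 0 = InnerProductSpace.toDual ℝ (EuclideanSpace ℝ (Fin 2)) a := by
    have h1 := (hdiff 0).hasGradientAt
    rw [hg0] at h1
    exact (hasGradientAt_iff_hasFDerivAt.mp h1).fderiv
  -- subgradient inequality
  have hsub : ∀ y : EuclideanSpace ℝ (Fin 2), (inner ℝ a y : ℝ) ≤ f y := by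
    intro y
    have h2 := subgrad hconv (hdiff 0) hf0 y
    rwa [hfd0, InnerProductSpace.toDual_apply_apply] at h2
  -- h := f - ⟪a, ·⟫ has a global min at a (= x₁)
  set h : EuclideanSpace ℝ (Fin 2) → ℝ := fun z => f z - inner ℝ a z with hh
  have haa : (inner ℝ a a : ℝ) = 1 := by
    rw [PiLp.inner_apply, Fin.sum_univ_two, ha0, ha1]
    norm_num
  have hmin : IsLocalMin h a := by
    have hge : ∀ z, h a ≤ h z := by
      intro z
      simp only [hh, hf1, haa]
      linarith [hsub z]
    exact IsMinOn.isLocalMin (fun z _ => hge z) Filter.univ_mem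
  have hfdh : fderiv ℝ h a = 0 := hmin.fderiv_eq_zero
  have hfd1 : fderiv ℝ f a = InnerProductSpace.toDual ℝ (EuclideanSpace ℝ (Fin 2)) b := by
    have h1 := (hdiff a).hasGradientAt
    rw [hg1] at h1
    exact (hasGradientAt_iff_hasFDerivAt.mp h1).fderiv
  have H : HasFDerivAt h (fderiv ℝ f a - innerSL ℝ a) a :=
    (hdiff a).hasFDerivAt.sub (innerSL ℝ a).hasFDerivAt
  have hzero2 : fderiv ℝ f a - innerSL ℝ a = 0 := by rw [← H.fderiv, hfdh]
  set e : EuclideanSpace ℝ (Fin 2) := EuclideanSpace.single 1 (1:ℝ) with he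
  have heval := congrFun (congrArg DFunLike.coe hzero2) e
  simp only [ContinuousLinearMap.sub_apply, hfd1, InnerProductSpace.toDual_apply_apply,
    innerSL_apply_apply, ContinuousLinearMap.zero_apply, he,
    EuclideanSpace.inner_single_right, RCLike.conj_to_real, conj_trivial] at heval
  rw [hb1, ha1] at heval
  norm_num at heval
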